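/- For all measurable g, g* : 𝒱 → ℝ, assuming w·(φ − g*(V))², w·(φ − g*(V))·(g(V) − g*(V)) and w·(g(V) − g*(V))² are integrable, the map t ↦ E[w·(φ − (g*(V) + t·(g(V) − g*(V))))²] (t ∈ ℝ) is differentiable at t = 0, with derivative equal to −2·E[(λ(π(X))·R + w·(Q¹(X) − Q⁰(X) − g*(V)))·(g(V) − g*(V))], where R := (A/π(X))·(Y − Q¹(X)) − ((1−A)/(1−π(X)))·(Y − Q⁰(X)). -/

import Mathlib

open MeasureTheory ProbabilityTheory

/-- The weight `w = (A − π(X))·λ'(π(X)) + λ(π(X))`. -/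
noncomputable def wFun {Ω 𝓧 : Type*} (lam lam' : ℝ → ℝ) (A : Ω → ℝ) (X : Ω → 𝓧)
    (p : 𝓧 → ℝ) (ω : Ω) : ℝ :=
  (A ω - p (X ω)) * lam' (p (X ω)) + lam (p (X ω))

/-- The pseudo-outcome
`φ = (λ(π(X))/w)·[(A/π(X))(Y − Q¹(X)) − ((1−A)/(1−π(X)))(Y − Q⁰(X))] + Q¹(X) − Q⁰(X)`. -/
noncomputable def phiFun {Ω 𝓧 : Type*} (lam lam' : ℝ → ℝ) (A Y : Ω → ℝ) (X : Ω → 𝓧)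
    (p q0 q1 : 𝓧 → ℝ) (ω : Ω) : ℝ :=
  lam (p (X ω)) / wFun lam lam' A X p ω *
      (A ω / p (X ω) * (Y ω - q1 (X ω)) - (1 - A ω) / (1 - p (X ω)) * (Y ω - q0 (X ω)))
    + q1 (X ω) - q0 (X ω)

/-- the weighted population risk `t ↦ E[w(φ − (g* + t(g − g*))(V))²]` is
differentiable at `t = 0` with derivative
`−2·E[(λ(π(X))·R + w·(Q¹(X) − Q⁰(X) − g*(V)))·(g(V) − g*(V))]`. -/
theorem stmt6 {Ω 𝓧 𝓥 : Type*} [MeasurableSpace Ω] [MeasurableSpace 𝓧] [MeasurableSpace 𝓥]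
    (P : Measure Ω) [IsProbabilityMeasure P]
    (X : Ω → 𝓧) (hX : Measurable X) (v : 𝓧 → 𝓥) (hv : Measurable v)
    (A Y : Ω → ℝ) (hA : Measurable A) (hY : Measurable Y)
    (pr : 𝓧 → ℝ) (hprm : Measurable pr) (hpr : ∀ x, 0 < pr x ∧ pr x < 1)
    (Q0 Q1 : 𝓧 → ℝ) (hQ0m : Measurable Q0) (hQ1m : Measurable Q1)
    (lam lam' : ℝ → ℝ) (hlam : ∀ p, HasDerivAt lam (lam' p) p) (hlam' : Continuous lam')
    (hw : ∀ᵐ ω ∂P, wFun lam lam' A X pr ω ≠ 0)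
    (g gstar : 𝓥 → ℝ) (hg : Measurable g) (hgstar : Measurable gstar)
    (hI1 : Integrable (fun ω => wFun lam lam' A X pr ω *
      (phiFun lam lam' A Y X pr Q0 Q1 ω - gstar (v (X ω))) ^ 2) P)
    (hI2 : Integrable (fun ω => wFun lam lam' A X pr ω *
      (phiFun lam lam' A Y X pr Q0 Q1 ω - gstar (v (X ω))) * (g (v (X ω)) - gstar (v (X ω)))) P)
    (hI3 : Integrable (fun ω => wFun lam lam' A X pr ω *
      (g (v (X ω)) - gstar (v (X ω))) ^ 2) P) :
    HasDerivAt
      (fun t : ℝ => ∫ ω, wFun lam lam' A X pr ω *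
        (phiFun lam lam' A Y X pr Q0 Q1 ω
          - (gstar (v (X ω)) + t * (g (v (X ω)) - gstar (v (X ω))))) ^ 2 ∂P)
      (-2 * ∫ ω,
        (lam (pr (X ω)) *
            (A ω / pr (X ω) * (Y ω - Q1 (X ω))
              - (1 - A ω) / (1 - pr (X ω)) * (Y ω - Q0 (X ω)))
          + wFun lam lam' A X pr ω * (Q1 (X ω) - Q0 (X ω) - gstar (v (X ω))))
          * (g (v (X ω)) - gstar (v (X ω))) ∂P)
      0 := by
  set w := fun ω => wFun lam lam' A X pr ω with hwdef
  set φ := fun ω => phiFun lam lam' A Y X pr Q0 Q1 ω with hφdef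
  set d := fun ω => g (v (X ω)) - gstar (v (X ω)) with hddef
  set gs := fun ω => gstar (v (X ω)) with hgsdef
  have hEq : ∀ t : ℝ, (∫ ω, w ω * (φ ω - (gs ω + t * d ω)) ^ 2 ∂P)
      = (∫ ω, w ω * (φ ω - gs ω) ^ 2 ∂P)
        - 2 * t * (∫ ω, w ω * (φ ω - gs ω) * d ω ∂P)
        + t ^ 2 * (∫ ω, w ω * d ω ^ 2 ∂P) := by
    intro t
    have : (fun ω => w ω * (φ ω - (gs ω + t * d ω)) ^ 2)
        = fun ω => (w ω * (φ ω - gs ω) ^ 2 - (2 * t) * (w ω * (φ ω - gs ω) * d ω))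
          + t ^ 2 * (w ω * d ω ^ 2) := funext fun ω => by ring
    have hB' : Integrable (fun ω => (2 * t) * (w ω * (φ ω - gs ω) * d ω)) P :=
      hI2.const_mul (2 * t)
    have hA' : Integrable
        (fun ω => w ω * (φ ω - gs ω) ^ 2 - (2 * t) * (w ω * (φ ω - gs ω) * d ω)) P :=
      hI1.sub hB'
    have hC' : Integrable (fun ω => t ^ 2 * (w ω * d ω ^ 2)) P := hI3.const_mul (t ^ 2)
    rw [this, integral_add hA' hC', integral_sub hI1 hB', integral_const_mul, integral_const_mul]
  have h1 : HasDerivAt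
      (fun t : ℝ => (∫ ω, w ω * (φ ω - gs ω) ^ 2 ∂P)
        - 2 * t * (∫ ω, w ω * (φ ω - gs ω) * d ω ∂P)
        + t ^ 2 * (∫ ω, w ω * d ω ^ 2 ∂P))
      (-2 * (∫ ω, w ω * (φ ω - gs ω) * d ω ∂P)) 0 := by
    have hB : HasDerivAt (fun t : ℝ => 2 * t * (∫ ω, w ω * (φ ω - gs ω) * d ω ∂P))
        (2 * (∫ ω, w ω * (φ ω - gs ω) * d ω ∂P)) 0 := by
      simpa using ((hasDerivAt_id (0:ℝ)).const_mul 2).mul_const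
        (∫ ω, w ω * (φ ω - gs ω) * d ω ∂P)
    have hC : HasDerivAt (fun t : ℝ => t ^ 2 * (∫ ω, w ω * d ω ^ 2 ∂P)) 0 0 := by
      simpa using (hasDerivAt_pow 2 (0:ℝ)).mul_const (∫ ω, w ω * d ω ^ 2 ∂P)
    have := ((hasDerivAt_const (0:ℝ) (∫ ω, w ω * (φ ω - gs ω) ^ 2 ∂P)).sub hB).add hC
    exact this.congr_deriv (by ring)
  have h2 : (∫ ω, (lam (pr (X ω)) *
        (A ω / pr (X ω) * (Y ω - Q1 (X ω)) - (1 - A ω) / (1 - pr (X ω)) * (Y ω - Q0 (X ω)))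
      + w ω * (Q1 (X ω) - Q0 (X ω) - gstar (v (X ω)))) * (g (v (X ω)) - gstar (v (X ω))) ∂P)
      = ∫ ω, w ω * (φ ω - gs ω) * d ω ∂P := by
    refine integral_congr_ae (hw.mono fun ω hω => ?_)
    simp only [hφdef, hgsdef, hddef, hwdef, phiFun]
    field_simp
    ring_nf
    try tauto
  have hfun : (fun t : ℝ => ∫ ω, wFun lam lam' A X pr ω *
      (phiFun lam lam' A Y X pr Q0 Q1 ω
        - (gstar (v (X ω)) + t * (g (v (X ω)) - gstar (v (X ω))))) ^ 2 ∂P)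
      = fun t : ℝ => (∫ ω, w ω * (φ ω - gs ω) ^ 2 ∂P)
        - 2 * t * (∫ ω, w ω * (φ ω - gs ω) * d ω ∂P)
        + t ^ 2 * (∫ ω, w ω * d ω ^ 2 ∂P) := funext fun t => hEq t
  rw [hfun, h2]
  exact h1
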